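/- If every S_i consists of a single element a_i carried with multiplicity t_i + 1, then f[S] = f_t(a) for every f ∈ F[x_1,...,x_n], where a = (a_1,...,a_n) and t = (t_1,...,t_n). -/

import Mathlib

open MvPolynomial

/-- The Taylor coefficient `f_u(s)`: the coefficient of `x^u` in `f(x + s)`. -/
noncomputable def taylorCoeff {F : Type*} [Field F] {n : ℕ}
    (f : MvPolynomial (Fin n) F) (s : Fin n → F) (u : Fin n →₀ ℕ) : F :=
  coeff u (aeval (fun i => X i + C (s i)) f)

/-- Membership in the ideal `I(s, w)`: all Taylor coefficients `f_u(s)` with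
`u < w` (componentwise) vanish. -/
def memPointIdeal {F : Type*} [Field F] {n : ℕ}
    (f : MvPolynomial (Fin n) F) (s : Fin n → F) (w : Fin n → ℕ) : Prop :=
  ∀ u : Fin n →₀ ℕ, (∀ i, u i < w i) → taylorCoeff f s u = 0

/-- The polynomial `g_i(x_i) = ∏_{s ∈ S_i} (x_i - s)^{m_i(s)}`. -/
noncomputable def gPoly {F : Type*} [Field F] {n : ℕ}
    (S : Fin n → Finset F) (m : Fin n → F → ℕ) (i : Fin n) : MvPolynomial (Fin n) F :=
  ∏ s ∈ S i, (X i - C s) ^ m i s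

/-- The size `d_i = Σ_{s ∈ S_i} m_i(s)` of the multiset `(S_i, m_i)`. -/
def dSize {F : Type*} {n : ℕ} (S : Fin n → Finset F) (m : Fin n → F → ℕ) (i : Fin n) : ℕ :=
  ∑ s ∈ S i, m i s

section Aux

variable {F : Type*} [Field F] {n : ℕ}

lemma coeff_zero_of_degreeOf_lt {p : MvPolynomial (Fin n) F} {m : Fin n →₀ ℕ} {i : Fin n}
    (h : p.degreeOf i < m i) : coeff m p = 0 := by
  by_contra hc
  exact absurd (monomial_le_degreeOf i (mem_support_iff.2 hc)) (not_le.2 h)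

lemma degreeOf_shift_pow_le (a : F) (i j : Fin n) (k : ℕ) :
    degreeOf j ((X i + C a : MvPolynomial (Fin n) F) ^ k) ≤ if i = j then k else 0 := by
  refine (degreeOf_pow_le j _ k).trans ?_
  have h1 : degreeOf j (X i + C a : MvPolynomial (Fin n) F) ≤ if i = j then 1 else 0 := by
    refine (degreeOf_add_le j _ _).trans ?_
    simp [degreeOf_X, degreeOf_C, eq_comm]
  by_cases h : i = j
  · simp only [h, if_true] at h1 ⊢
    calc k * degreeOf j (X j + C a : MvPolynomial (Fin n) F) ≤ k * 1 := Nat.mul_le_mul_left k h1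
    _ = k := mul_one k
  · simp only [h, if_false] at h1 ⊢
    calc k * degreeOf j (X i + C a : MvPolynomial (Fin n) F) ≤ k * 0 := Nat.mul_le_mul_left k h1
    _ = 0 := mul_zero k

lemma degreeOf_prod_shift_le (a : Fin n → F) (u : Fin n → ℕ) (j : Fin n) (s : Finset (Fin n)) :
    degreeOf j (∏ i ∈ s, (X i + C (a i) : MvPolynomial (Fin n) F) ^ u i)
      ≤ ∑ i ∈ s, if i = j then u i else 0 := by
  refine (degreeOf_prod_le j s _).trans ?_
  exact Finset.sum_le_sum fun i _ => degreeOf_shift_pow_le (a i) i j (u i)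

lemma key_coeff_prod (a : Fin n → F) (w : Fin n → ℕ) (s : Finset (Fin n)) :
    coeff (∑ i ∈ s, Finsupp.single i (w i))
      (∏ i ∈ s, (X i + C (a i) : MvPolynomial (Fin n) F) ^ w i) = 1 := by
  classical
  induction s using Finset.cons_induction with
  | empty => simp
  | cons j s hj ih =>
    rw [Finset.prod_cons, Finset.sum_cons]
    set W : Fin n →₀ ℕ := ∑ i ∈ s, Finsupp.single i (w i) with hW
    set P : MvPolynomial (Fin n) F := ∏ i ∈ s, (X i + C (a i)) ^ w i with hP
    have hWj : W j = 0 := by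
      rw [hW, Finsupp.finset_sum_apply]
      exact Finset.sum_eq_zero fun i hi => Finsupp.single_eq_of_ne (by rintro rfl; exact hj hi)
    have hdegP : degreeOf j P ≤ 0 := by
      refine (degreeOf_prod_shift_le a w j s).trans (le_of_eq ?_)
      exact Finset.sum_eq_zero fun i hi => if_neg (by rintro rfl; exact hj hi)
    rw [add_pow, Finset.sum_mul, coeff_sum]
    have hterm : ∀ k ∈ Finset.range (w j + 1),
        coeff (Finsupp.single j (w j) + W)
          ((X j : MvPolynomial (Fin n) F) ^ k * C (a j) ^ (w j - k) * ((w j).choose k : MvPolynomial (Fin n) F) * P)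
        = if k = w j then 1 else 0 := by
      intro k hk
      rw [Finset.mem_range] at hk
      have hk' : k ≤ w j := Nat.lt_succ_iff.mp hk
      have hmono : (X j : MvPolynomial (Fin n) F) ^ k * C (a j) ^ (w j - k) * ((w j).choose k : MvPolynomial (Fin n) F) * P
          = monomial (Finsupp.single j k) ((a j) ^ (w j - k) * ((w j).choose k : F)) * P := by
        rw [X_pow_eq_monomial]
        rw [show ((w j).choose k : MvPolynomial (Fin n) F) = C (((w j).choose k : F)) by
          simp]
        rw [← C_pow, C_apply, C_apply, monomial_mul, monomial_mul]
        simp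
      rw [hmono, coeff_monomial_mul']
      have hle : Finsupp.single j k ≤ Finsupp.single j (w j) + W := by
        rw [Finsupp.single_le_iff]
        simp [hWj, hk']
      rw [if_pos hle]
      have hsub : Finsupp.single j (w j) + W - Finsupp.single j k
          = Finsupp.single j (w j - k) + W := by
        ext i
        by_cases h : i = j
        · subst h; simp [hWj]
        · simp [Finsupp.single_eq_of_ne' (Ne.symm h)]
      rw [hsub]
      by_cases hcase : k = w j
      · subst hcase
        simp [ih, hWj]
      · have hpos : 0 < w j - k := by omega
        have : coeff (Finsupp.single j (w j - k) + W) P = 0 := by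
          apply coeff_zero_of_degreeOf_lt (i := j)
          have : (Finsupp.single j (w j - k) + W) j = w j - k := by simp [hWj]
          omega
        rw [this, mul_zero, if_neg hcase]
    rw [Finset.sum_congr rfl hterm]
    simp

lemma finsupp_eq_sum_single (t : Fin n → ℕ) :
    (Finsupp.equivFunOnFinite.symm t : Fin n →₀ ℕ) = ∑ i, Finsupp.single i (t i) := by
  ext j
  rw [Finsupp.finset_sum_apply]
  simp [Finsupp.single_apply]

end Aux

/-- If every `S_i` consists of the single element `a_i` with multiplicity `t_i + 1`
(so `g_i = (x_i - a_i)^{t_i + 1}` and `d_i = t_i + 1`), then `f[S] = f_t(a)`: the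
coefficient of `x^{d - 1} = x^t` in the remainder `r = (f mod (g_1, …, g_n))` equals the
Taylor coefficient `f_t(a)`. -/
theorem stmt_11 {F : Type*} [Field F] {n : ℕ} (hn : 1 ≤ n)
    (a : Fin n → F) (t : Fin n → ℕ)
    (f r : MvPolynomial (Fin n) F)
    (hr : ∀ i, r.degreeOf i < t i + 1)
    (hfr : f - r ∈ Ideal.span
      (Set.range fun i : Fin n => (X i - C (a i)) ^ (t i + 1))) :
    coeff (Finsupp.equivFunOnFinite.symm t) r =
      taylorCoeff f a (Finsupp.equivFunOnFinite.symm t) := by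
  classical
  set e : Fin n →₀ ℕ := Finsupp.equivFunOnFinite.symm t with he
  have hej : ∀ j, e j = t j := fun j => rfl
  set φ : MvPolynomial (Fin n) F →ₐ[F] MvPolynomial (Fin n) F :=
    aeval (fun i => X i + C (a i)) with hφ
  -- Step 1 : coeff e (φ (f - r)) = 0
  have step1 : coeff e (φ (f - r)) = 0 := by
    obtain ⟨c, hc⟩ := (Submodule.mem_span_range_iff_exists_fun _).mp hfr
    have : φ (f - r) = ∑ i, φ (c i) * (X i : MvPolynomial (Fin n) F) ^ (t i + 1) := by
      rw [← hc, map_sum]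
      refine Finset.sum_congr rfl fun i _ => ?_
      rw [smul_eq_mul, map_mul, map_pow, map_sub, hφ, aeval_X, aeval_C]
      simp
    rw [this, coeff_sum]
    refine Finset.sum_eq_zero fun i _ => ?_
    rw [X_pow_eq_monomial, coeff_mul_monomial']
    rw [if_neg]
    rw [Finsupp.single_le_iff]
    simp [hej]
  -- Step 2 : coeff e (φ r) = coeff e r
  have step2 : coeff e (φ r) = coeff e r := by
    conv_lhs => rw [r.as_sum]
    rw [map_sum, coeff_sum]
    have hterm : ∀ u ∈ r.support,
        coeff e (φ (monomial u (coeff u r)))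
          = coeff u r * coeff e (∏ i, (X i + C (a i) : MvPolynomial (Fin n) F) ^ u i) := by
      intro u hu
      rw [hφ, aeval_monomial, algebraMap_eq, coeff_C_mul]
      congr 2
      rw [Finsupp.prod]
      refine Finset.prod_subset (Finset.subset_univ _) ?_
      intro i _ hi
      rw [Finsupp.notMem_support_iff.mp hi, pow_zero]
    rw [Finset.sum_congr rfl hterm]
    rw [Finset.sum_eq_single e]
    · have hkey : coeff e (∏ i, (X i + C (a i) : MvPolynomial (Fin n) F) ^ e i) = 1 := by
        have h2 := key_coeff_prod a t Finset.univ
        rw [← finsupp_eq_sum_single] at h2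
        simpa [hej] using h2
      rw [hkey, mul_one]
    · intro u hu hne
      have hzero : coeff e (∏ i, (X i + C (a i) : MvPolynomial (Fin n) F) ^ u i) = 0 := by
        obtain ⟨j, hj⟩ : ∃ j, u j ≠ t j := by
          by_contra h
          push_neg at h
          exact hne (Finsupp.ext fun j => (h j).trans (hej j).symm)
        have hle : u j ≤ t j := by
          have := monomial_le_degreeOf j hu
          have := hr j
          omega
        have hlt : u j < t j := lt_of_le_of_ne hle hj
        apply coeff_zero_of_degreeOf_lt (i := j)
        have := degreeOf_prod_shift_le a u j Finset.univ
        simp only [Finset.sum_ite_eq' Finset.univ, Finset.mem_univ, if_true] at this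
        have := hej j
        omega
      rw [hzero, mul_zero]
    · intro hnot
      rw [MvPolynomial.notMem_support_iff.mp hnot, zero_mul]
  -- conclude
  have : taylorCoeff f a e = coeff e (φ r) + coeff e (φ (f - r)) := by
    rw [taylorCoeff, ← coeff_add, ← map_add]
    congr 2
    ring
  rw [this, step1, step2, add_zero]
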